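/- arXiv:0710.2254 — 2 statements merged into one kernel-verified Lean document; each statement's English description precedes it below -/
import Mathlib

section
/- The pullback of an equivalence of categories along an isofibration of groupoids is again an equivalence of categories. -/
open CategoryTheory

/-- The strict pullback of groupoids along functors `h : C ⥤ D` and `g : B ⥤ D`:
objects are pairs `(c, b)` with `h.obj c = g.obj b`. -/
def GrpdPullback {C B D : Type*} [Groupoid C] [Groupoid B] [Groupoid D]
    (h : C ⥤ D) (g : B ⥤ D) : Type _ :=
  { p : C × B // h.obj p.1 = g.obj p.2 }

instance {C B D : Type*} [Groupoid C] [Groupoid B] [Groupoid D]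
    (h : C ⥤ D) (g : B ⥤ D) : Category (GrpdPullback h g) where
  Hom p q := { m : (p.1.1 ⟶ q.1.1) × (p.1.2 ⟶ q.1.2) //
      h.map m.1 ≫ eqToHom q.2 = eqToHom p.2 ≫ g.map m.2 }
  id p := ⟨(𝟙 _, 𝟙 _), by simp⟩
  comp φ ψ := ⟨(φ.1.1 ≫ ψ.1.1, φ.1.2 ≫ ψ.1.2), by
    simp only [Functor.map_comp, Category.assoc]
    rw [ψ.2, ← Category.assoc, φ.2, Category.assoc]⟩
  id_comp φ := Subtype.ext (Prod.ext (Category.id_comp _) (Category.id_comp _))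
  comp_id φ := Subtype.ext (Prod.ext (Category.comp_id _) (Category.comp_id _))
  assoc φ ψ χ := Subtype.ext (Prod.ext (Category.assoc _ _ _) (Category.assoc _ _ _))

/-- The second projection from the pullback. -/
def GrpdPullback.snd {C B D : Type*} [Groupoid C] [Groupoid B] [Groupoid D]
    (h : C ⥤ D) (g : B ⥤ D) : GrpdPullback h g ⥤ B where
  obj p := p.1.2
  map m := m.1.2

/-- The pullback of an equivalence of categories along an isofibration of groupoids
is again an equivalence of categories. -/
theorem stmt_4 {C B D : Type*} [Groupoid C] [Groupoid B] [Groupoid D]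
    (h : C ⥤ D) (g : B ⥤ D)
    (hg : ∀ (b : B) (d : D) (γ : g.obj b ⟶ d),
      ∃ (b' : B) (e : g.obj b' = d) (β : b ⟶ b'), g.map β ≫ eqToHom e = γ)
    (hh : h.IsEquivalence) :
    (GrpdPullback.snd h g).IsEquivalence := by
  haveI : h.Full := hh.full
  haveI : h.Faithful := hh.faithful
  haveI : h.EssSurj := hh.essSurj
  haveI : (GrpdPullback.snd h g).Full := ⟨fun {p q} β => by
    refine ⟨⟨(h.preimage (eqToHom p.2 ≫ g.map β ≫ eqToHom q.2.symm), β), ?_⟩, rfl⟩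
    simp
    erw [eqToHom_trans, eqToHom_refl, Category.comp_id]
    rfl⟩
  haveI : (GrpdPullback.snd h g).Faithful := ⟨fun {p q} φ ψ hfs => by
    have h2 : φ.1.2 = ψ.1.2 := hfs
    apply Subtype.ext; apply Prod.ext
    · apply h.map_injective
      have e1 := φ.2
      have e2 := ψ.2
      rw [h2, ← e2] at e1
      exact (cancel_mono _).mp e1
    · exact h2⟩
  haveI : (GrpdPullback.snd h g).EssSurj := ⟨fun b => by
    obtain ⟨b', e, β, hβ⟩ := hg b (h.obj (h.objPreimage (g.obj b)))
      (h.objObjPreimageIso (g.obj b)).inv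
    exact ⟨⟨(h.objPreimage (g.obj b), b'), e.symm⟩, ⟨(asIso β).symm⟩⟩⟩
  exact ⟨‹_›, ‹_›, ‹_›⟩
end

section
/- Let X be a simplicial set satisfying the Segal condition (all Segal maps X_n → X_1 ×_{X_0} ⋯ ×_{X_0} X_1 are bijections) and also the Bousfield–Segal condition: the maps X_n → X_1 ×_{X_0} ⋯ ×_{X_0} X_1 induced by γ^k : [1] → [n], 0 ↦ 0, 1 ↦ k+1, are bijections for n ≥ 2. Then the category corresponding to X via the Segal condition is a groupoid. -/
open CategoryTheory SimplexCategory Opposite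

universe u

/-- The map `γ^k : [1] ⟶ [n]` in `Δ` sending `0 ↦ 0` and `1 ↦ k + 1`. -/
def bousfieldMap {n : ℕ} (k : Fin n) : (mk 1 : SimplexCategory) ⟶ mk n :=
  mkHom ⟨fun j => if j = 0 then 0 else k.succ, by
    intro a b hab
    fin_cases a <;> fin_cases b <;> simp_all [Fin.le_def]⟩

/-- If the nerve of a small category `C` (a simplicial set satisfying the Segal
condition) also satisfies the Bousfield–Segal condition, i.e. for every `n ≥ 2` the map
`X_n → X_1 ×_{X_0} ⋯ ×_{X_0} X_1` induced by the maps `γ^k : [1] → [n]`, `0 ↦ 0`,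
`1 ↦ k + 1`, is a bijection, then `C` is a groupoid. -/
theorem stmt_12 (C : Type u) [SmallCategory C]
    (hinj : ∀ (n : ℕ) (w₁ w₂ : (nerve C).obj (op (mk (n + 2)))),
      (∀ k : Fin (n + 2),
        (nerve C).map (bousfieldMap k).op w₁ = (nerve C).map (bousfieldMap k).op w₂) →
      w₁ = w₂)
    (hsurj : ∀ (n : ℕ) (p : Fin (n + 2) → (nerve C).obj (op (mk 1))),
      (∀ j k : Fin (n + 2),
        (nerve C).map (δ (1 : Fin 2)).op (p j) = (nerve C).map (δ (1 : Fin 2)).op (p k)) →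
      ∃ w : (nerve C).obj (op (mk (n + 2))),
        ∀ k : Fin (n + 2), (nerve C).map (bousfieldMap k).op w = p k) :
    ∀ {x y : C} (f : x ⟶ y), IsIso f := by
  have key : ∀ {x y : C} (f : x ⟶ y), ∃ g : y ⟶ x, f ≫ g = 𝟙 x := by
    intro x y f
    obtain ⟨w, hw⟩ := hsurj 0 ![ComposableArrows.mk₁ f, ComposableArrows.mk₁ (𝟙 x)] (by
      intro j k
      apply ComposableArrows.ext₀
      fin_cases j <;> fin_cases k <;> rfl)
    have h0 := hw 0
    have h1 := hw 1
    simp only [Matrix.cons_val_zero, Matrix.cons_val_one, Matrix.head_cons] at h0 h1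
    have hx0 : w.obj 0 = x := Functor.congr_obj h0 0
    have hy : w.obj 1 = y := Functor.congr_obj h0 1
    have hx2 : w.obj 2 = x := Functor.congr_obj h1 1
    have e01 := Functor.congr_hom h0 (homOfLE (show (0:Fin 2) ≤ 1 by decide))
    have e02 := Functor.congr_hom h1 (homOfLE (show (0:Fin 2) ≤ 1 by decide))
    simp only [ComposableArrows.mk₁_map, nerve_map] at e01 e02
    have e01' : w.map (homOfLE (show (0:Fin 3) ≤ 1 by decide)) =
        eqToHom hx0 ≫ f ≫ eqToHom hy.symm := e01
    have e02' : w.map (homOfLE (show (0:Fin 3) ≤ 2 by decide)) =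
        eqToHom hx0 ≫ 𝟙 x ≫ eqToHom hx2.symm := e02
    refine ⟨eqToHom hy.symm ≫ w.map (homOfLE (show (1:Fin 3) ≤ 2 by decide)) ≫ eqToHom hx2, ?_⟩
    have comp : w.map (homOfLE (show (0:Fin 3) ≤ 1 by decide)) ≫
        w.map (homOfLE (show (1:Fin 3) ≤ 2 by decide)) =
        w.map (homOfLE (show (0:Fin 3) ≤ 2 by decide)) := by
      exact (w.map_comp _ _).symm
    rw [e01'] at comp
    rw [e02'] at comp
    simp only [Category.id_comp, Category.assoc] at comp
    calc f ≫ eqToHom hy.symm ≫ w.map (homOfLE (show (1:Fin 3) ≤ 2 by decide)) ≫ eqToHom hx2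
        = eqToHom hx0.symm ≫ (eqToHom hx0 ≫ f ≫ eqToHom hy.symm ≫
          w.map (homOfLE (show (1:Fin 3) ≤ 2 by decide))) ≫ eqToHom hx2 := by simp
      _ = 𝟙 x := by rw [comp]; simp
  intro x y f
  obtain ⟨g, hg⟩ := key f
  obtain ⟨h, hh⟩ := key g
  have : g ≫ f = 𝟙 y := by
    have : h = f := by
      calc h = 𝟙 x ≫ h := by simp
        _ = (f ≫ g) ≫ h := by rw [hg]
        _ = f ≫ (g ≫ h) := by simp
        _ = f := by rw [hh]; simp
    rw [← this]; exact hh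
  exact ⟨g, hg, this⟩
end
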